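/- For every even integer k with 0 ≤ k ≤ ⌊D/2⌋ there exists a subspace W of ℂ^X of dimension ⌊D/2⌋ − k + 1 that is invariant under both A and A*, contains no nonzero proper subspace invariant under both A and A*, and has a basis w_0, …, w_{⌊D/2⌋−k} such that for all 0 ≤ i ≤ ⌊D/2⌋−k one has A·w_i = γ_i·w_{i−1} + α_i·w_i + β_i·w_{i+1} and A*·w_i = (D − 2(2i+k))·w_i, where α_i = 2i(D−2i−2k) − k, β_i = (i+1)(2i+1), γ_i = (D−2i−2k+1)(D−2i−2k+2)/2, and by convention w_{−1} = 0 and w_{⌊D/2⌋−k+1} = 0. -/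

import Mathlib

open Matrix

/-- Vertex set of the hypercube `H(D,2)`: binary words of length `D`. -/
abbrev Vtx (D : ℕ) := Fin D → ZMod 2

/-- Vertex set of the halved cube: binary words of even Hamming weight. -/
abbrev HVtx (D : ℕ) := {x : Vtx D // Even (hammingNorm x)}

/-- Adjacency matrix of the halved cube `½H(D,2)`. -/
noncomputable def adjHalf (D : ℕ) : Matrix (HVtx D) (HVtx D) ℂ :=
  fun y z => if hammingNorm (y.val - z.val) = 2 then 1 else 0

/-- Dual adjacency matrix of the halved cube with respect to `x₀`. -/
noncomputable def dualHalf (D : ℕ) (x₀ : HVtx D) : Matrix (HVtx D) (HVtx D) ℂ :=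
  Matrix.diagonal fun y => (D : ℂ) - 2 * hammingNorm (x₀.val - y.val)

/-- A submodule is invariant under (the action by `mulVec` of) a matrix. -/
def MatInvariant {n : Type*} [Fintype n] (M : Matrix n n ℂ) (W : Submodule ℂ (n → ℂ)) : Prop :=
  ∀ v ∈ W, M.mulVec v ∈ W

namespace HC
open Finset

variable {D : ℕ}

/-- flip coordinate `j` -/
def flp (j : Fin D) (y : Vtx D) : Vtx D := fun i => if i = j then y i + 1 else y i

lemma zmod2_aa (a : ZMod 2) : a + 1 + 1 = a := by revert a; decide
lemma zmod2_ne (a : ZMod 2) : a + 1 ≠ a := by revert a; decide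
lemma zmod2_ne_iff (a b : ZMod 2) : a ≠ b ↔ a = b + 1 := by revert a b; decide
lemma zmod2_sub (a b : ZMod 2) : a - b = a + b := by revert a b; decide
lemma zmod2_ne_zero (a : ZMod 2) : a ≠ 0 ↔ a = 1 := by revert a; decide

@[simp] lemma flp_self (j : Fin D) (y : Vtx D) : flp j y j = y j + 1 := if_pos rfl
lemma flp_ne {i j : Fin D} (h : i ≠ j) (y : Vtx D) : flp j y i = y i := if_neg h

@[simp] lemma flp_flp (j : Fin D) (y : Vtx D) : flp j (flp j y) = y := by
  funext i; by_cases h : i = j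
  · subst h; simp [flp, zmod2_aa]
  · simp [flp, h]

lemma flp_comm (j l : Fin D) (y : Vtx D) : flp j (flp l y) = flp l (flp j y) := by
  funext i; by_cases hj : i = j <;> by_cases hl : i = l <;> simp_all [flp]

variable (x : Vtx D)

/-- distance to base point -/
def wt (y : Vtx D) : ℕ := hammingDist x y

lemma wt_eq_card (y : Vtx D) : wt x y = #(univ.filter fun j => y j ≠ x j) := by
  unfold wt hammingDist
  congr 1; ext j; simp [ne_comm]

lemma filter_eq_card (y : Vtx D) : #(univ.filter fun j => y j = x j) = D - wt x y := by
  have h := Finset.card_filter_add_card_filter_not (s := (univ : Finset (Fin D)))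
    (p := fun j => y j ≠ x j)
  simp only [card_univ, Fintype.card_fin, not_ne_iff] at h
  rw [wt_eq_card]; omega

lemma wt_le (y : Vtx D) : wt x y ≤ D := by
  have := hammingDist_le_card_fintype (x := x) (y := y)
  simpa [wt] using this

lemma wt_flp_up {j : Fin D} {y : Vtx D} (h : y j = x j) : wt x (flp j y) = wt x y + 1 := by
  rw [wt_eq_card, wt_eq_card]
  have : (univ.filter fun l => flp j y l ≠ x l)
      = insert j (univ.filter fun l => y l ≠ x l) := by
    ext l; by_cases hl : l = j
    · subst hl; simp [h, zmod2_ne]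
    · simp [flp_ne hl, hl]
  rw [this, card_insert_of_notMem (by simp [h])]

lemma wt_flp_down {j : Fin D} {y : Vtx D} (h : y j ≠ x j) : wt x (flp j y) + 1 = wt x y := by
  have hxj : y j + 1 = x j := by rw [(zmod2_ne_iff _ _).mp h, zmod2_aa]
  rw [wt_eq_card, wt_eq_card]
  have heq : (univ.filter fun l => y l ≠ x l)
      = insert j (univ.filter fun l => flp j y l ≠ x l) := by
    ext l; simp only [mem_insert, mem_filter, mem_univ, true_and]
    by_cases hl : l = j
    · subst hl; simp [h]
    · simp [flp_ne hl, hl]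
  rw [heq, card_insert_of_notMem (by simp [hxj])]

noncomputable def opL (f : Vtx D → ℂ) : Vtx D → ℂ :=
  fun y => ∑ j ∈ univ.filter (fun j => y j = x j), f (flp j y)

noncomputable def opR (f : Vtx D → ℂ) : Vtx D → ℂ :=
  fun y => ∑ j ∈ univ.filter (fun j => y j ≠ x j), f (flp j y)

lemma opL_add (f g : Vtx D → ℂ) : opL x (f + g) = opL x f + opL x g := by
  funext y; simp [opL, sum_add_distrib]

lemma opR_add (f g : Vtx D → ℂ) : opR x (f + g) = opR x f + opR x g := by
  funext y; simp [opR, sum_add_distrib]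

lemma opL_smul (c : ℂ) (f : Vtx D → ℂ) : opL x (c • f) = c • opL x f := by
  funext y; simp [opL, mul_sum]

lemma opR_smul (c : ℂ) (f : Vtx D → ℂ) : opR x (c • f) = c • opR x f := by
  funext y; simp [opR, mul_sum]

@[simp] lemma opL_zero : opL x (0 : Vtx D → ℂ) = 0 := by funext y; simp [opL]
@[simp] lemma opR_zero : opR x (0 : Vtx D → ℂ) = 0 := by funext y; simp [opR]

/-- support condition -/
def SuppOn (f : Vtx D → ℂ) (m : ℕ) : Prop := ∀ y, wt x y ≠ m → f y = 0

lemma suppOn_opR {f : Vtx D → ℂ} {m : ℕ} (hf : SuppOn x f m) : SuppOn x (opR x f) (m + 1) := by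
  intro y hy
  apply Finset.sum_eq_zero
  intro j hj
  simp only [mem_filter, mem_univ, true_and] at hj
  apply hf
  have := wt_flp_down x hj
  omega

lemma suppOn_smul {f : Vtx D → ℂ} {m : ℕ} (c : ℂ) (hf : SuppOn x f m) : SuppOn x (c • f) m := by
  intro y hy; simp [hf y hy]

/-- the `sl₂` commutator relation, pointwise -/
lemma commLR (f : Vtx D → ℂ) (y : Vtx D) :
    opL x (opR x f) y = opR x (opL x f) y + ((D : ℂ) - 2 * wt x y) * f y := by
  have hZ : ∀ j ∈ univ.filter (fun j => y j = x j),
      (univ.filter fun l => flp j y l ≠ x l)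
        = insert j (univ.filter fun l => y l ≠ x l) := by
    intro j hj; simp only [mem_filter, mem_univ, true_and] at hj
    ext l; by_cases hl : l = j
    · subst hl; simp [hj, zmod2_ne]
    · simp [flp_ne hl, hl]
  have hS : ∀ j ∈ univ.filter (fun j => y j ≠ x j),
      (univ.filter fun l => flp j y l = x l)
        = insert j (univ.filter fun l => y l = x l) := by
    intro j hj; simp only [mem_filter, mem_univ, true_and] at hj
    have hxj : y j + 1 = x j := by rw [(zmod2_ne_iff _ _).mp hj, zmod2_aa]
    ext l; simp only [mem_insert, mem_filter, mem_univ, true_and]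
    by_cases hl : l = j
    · subst hl; simp [hxj]
    · simp [flp_ne hl, hl]
  have e1 : opL x (opR x f) y
      = ∑ j ∈ univ.filter (fun j => y j = x j),
          (f y + ∑ l ∈ univ.filter (fun l => y l ≠ x l), f (flp l (flp j y))) := by
    apply Finset.sum_congr rfl
    intro j hj
    have hj' := (mem_filter.mp hj).2
    show ∑ l ∈ univ.filter (fun l => flp j y l ≠ x l), f (flp l (flp j y)) = _
    rw [hZ j hj, Finset.sum_insert (by simp [hj'])]
    rw [flp_flp]
  have e2 : opR x (opL x f) y
      = ∑ j ∈ univ.filter (fun j => y j ≠ x j),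
          (f y + ∑ l ∈ univ.filter (fun l => y l = x l), f (flp l (flp j y))) := by
    apply Finset.sum_congr rfl
    intro j hj
    have hj' := (mem_filter.mp hj).2
    show ∑ l ∈ univ.filter (fun l => flp j y l = x l), f (flp l (flp j y)) = _
    rw [hS j hj, Finset.sum_insert (by simp [hj'])]
    rw [flp_flp]
  rw [e1, e2]
  simp only [Finset.sum_add_distrib, Finset.sum_const, nsmul_eq_mul]
  have hdouble : ∑ j ∈ univ.filter (fun j => y j = x j),
        ∑ l ∈ univ.filter (fun l => y l ≠ x l), f (flp l (flp j y))
      = ∑ j ∈ univ.filter (fun j => y j ≠ x j),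
        ∑ l ∈ univ.filter (fun l => y l = x l), f (flp l (flp j y)) := by
    rw [Finset.sum_comm]
    apply Finset.sum_congr rfl; intro l _; apply Finset.sum_congr rfl; intro j _
    rw [flp_comm]
  rw [hdouble, filter_eq_card, wt_eq_card]
  have hle := wt_le x y
  rw [wt_eq_card] at hle
  push_cast [Nat.cast_sub hle]
  rw [← wt_eq_card]
  ring

end HC

namespace Harm
open Finset

variable {D : ℕ} (x : Vtx D)

/-- position of pair `t`, choice `b` -/
def pnat (t : ℕ) (b : Bool) : ℕ := 2 * t + (cond b 1 0)

lemma pnat_inj {t t' : ℕ} {b b' : Bool} (h : pnat t b = pnat t' b') : t = t' ∧ b = b' := by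
  unfold pnat at h
  cases b <;> cases b' <;> simp only [cond_true, cond_false] at h <;>
    refine ⟨by omega, by first | rfl | omega⟩

/-- the selected vertex for a sign pattern ε -/
def vE {k : ℕ} (ε : Fin k → Bool) : Vtx D :=
  fun i => if ∃ t : Fin k, pnat t.val (ε t) = i.val then x i + 1 else x i

def sgn {k : ℕ} (ε : Fin k → Bool) : ℂ := ∏ t : Fin k, (if ε t then (-1 : ℂ) else 1)

/-- the harmonic vector -/
noncomputable def hvec (k : ℕ) : Vtx D → ℂ :=
  fun y => ∑ ε : Fin k → Bool, sgn ε * (if y = vE x ε then 1 else 0)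

lemma vE_apply_of_mem {k : ℕ} {ε : Fin k → Bool} {i : Fin D} {t : Fin k}
    (h : pnat t.val (ε t) = i.val) : vE x ε i = x i + 1 := by
  unfold vE; rw [if_pos ⟨t, h⟩]

lemma vE_apply_of_not_mem {k : ℕ} {ε : Fin k → Bool} {i : Fin D}
    (h : ¬ ∃ t : Fin k, pnat t.val (ε t) = i.val) : vE x ε i = x i := by
  unfold vE; rw [if_neg h]

lemma vE_ne_iff {k : ℕ} (ε : Fin k → Bool) (i : Fin D) :
    vE x ε i ≠ x i ↔ ∃ t : Fin k, pnat t.val (ε t) = i.val := by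
  constructor
  · intro hne
    by_contra hc
    exact hne (vE_apply_of_not_mem x hc)
  · rintro ⟨t, ht⟩
    rw [vE_apply_of_mem x ht]
    exact HC.zmod2_ne _

lemma pnat_lt {k : ℕ} (hkD : 2 * k ≤ D) (t : Fin k) (b : Bool) : pnat t.val b < D := by
  have := t.isLt; unfold pnat; cases b <;> simp <;> omega

lemma wt_vE {k : ℕ} (hkD : 2 * k ≤ D) (ε : Fin k → Bool) : HC.wt x (vE x ε) = k := by
  rw [HC.wt_eq_card]
  have heq : (Finset.univ.filter fun i => vE x ε i ≠ x i)
      = Finset.univ.image (fun t : Fin k => (⟨pnat t.val (ε t), pnat_lt hkD t (ε t)⟩ : Fin D)) := by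
    ext i
    simp only [Finset.mem_filter, Finset.mem_univ, true_and, Finset.mem_image, vE_ne_iff]
    constructor
    · rintro ⟨t, ht⟩; exact ⟨t, by apply Fin.ext; exact ht⟩
    · rintro ⟨t, ht⟩; exact ⟨t, by rw [← ht]⟩
  rw [heq, Finset.card_image_of_injective _ ?_, Finset.card_univ, Fintype.card_fin]
  intro t t' htt
  have h2 := congrArg Fin.val htt
  simp only at h2
  exact Fin.ext (pnat_inj h2).1

lemma vE_inj {k : ℕ} (hkD : 2 * k ≤ D) :
    Function.Injective (vE x : (Fin k → Bool) → Vtx D) := by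
  intro ε ε' hee
  funext t
  set i : Fin D := ⟨pnat t.val (ε t), pnat_lt hkD t (ε t)⟩ with hi
  have h1 : vE x ε i = x i + 1 := vE_apply_of_mem x rfl
  have h2 : vE x ε' i ≠ x i := by rw [← hee, h1]; exact HC.zmod2_ne _
  obtain ⟨t', ht'⟩ := (vE_ne_iff x ε' i).mp h2
  obtain ⟨het, heb⟩ := pnat_inj (ht'.trans rfl)
  have h3 : t' = t := Fin.ext het
  subst h3
  exact heb.symm

lemma hvec_vE {k : ℕ} (hkD : 2 * k ≤ D) (ε : Fin k → Bool) : hvec x k (vE x ε) = sgn ε := by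
  unfold hvec
  rw [Finset.sum_eq_single ε]
  · simp
  · intro ε' _ hne
    rw [if_neg (fun hc => hne ((vE_inj x hkD) hc.symm)), mul_zero]
  · intro hc; exact absurd (Finset.mem_univ _) hc

lemma sgn_false {k : ℕ} : sgn (fun _ : Fin k => false) = 1 := by simp [sgn]

lemma hvec_ne_zero {k : ℕ} (hkD : 2 * k ≤ D) : hvec x k ≠ 0 := by
  intro hc
  have h1 := hvec_vE x hkD (fun _ => false)
  rw [hc, sgn_false] at h1
  simp at h1

lemma hvec_suppOn {k : ℕ} (hkD : 2 * k ≤ D) : HC.SuppOn x (hvec x k) k := by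
  intro y hy
  unfold hvec
  apply Finset.sum_eq_zero
  intro ε _
  rw [if_neg, mul_zero]
  intro hc
  exact hy (by rw [hc, wt_vE x hkD])

def posF {k : ℕ} (hkD : 2 * k ≤ D) (t : Fin k) (b : Bool) : Fin D :=
  ⟨pnat t.val b, pnat_lt hkD t b⟩

lemma posF_ne {k : ℕ} (hkD : 2 * k ≤ D) (t : Fin k) {b b' : Bool} (h : b ≠ b') :
    posF hkD t b ≠ posF hkD t b' := by
  intro hc
  exact h (pnat_inj (congrArg Fin.val hc)).2

lemma vE_empty {k : ℕ} (hkD : 2 * k ≤ D) {ε : Fin k → Bool} {t : Fin k} {b : Bool}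
    (hb : b ≠ ε t) : vE x ε (posF hkD t b) = x (posF hkD t b) := by
  apply vE_apply_of_not_mem
  rintro ⟨s, hs⟩
  obtain ⟨hst, hsb⟩ := pnat_inj hs
  have : s = t := Fin.ext hst
  subst this
  exact hb hsb.symm

lemma vE_full {k : ℕ} (hkD : 2 * k ≤ D) (ε : Fin k → Bool) (t : Fin k) :
    vE x ε (posF hkD t (ε t)) = x (posF hkD t (ε t)) + 1 :=
  vE_apply_of_mem x rfl

lemma sgn_update {k : ℕ} (ε : Fin k → Bool) (t : Fin k) :
    sgn (Function.update ε t (!(ε t))) = - sgn ε := by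
  unfold sgn
  rw [← Finset.mul_prod_erase Finset.univ _ (Finset.mem_univ t),
      ← Finset.mul_prod_erase Finset.univ (fun s => if ε s then (-1 : ℂ) else 1) (Finset.mem_univ t)]
  have hrest : ∏ s ∈ Finset.univ.erase t, (if Function.update ε t (!(ε t)) s then (-1 : ℂ) else 1)
      = ∏ s ∈ Finset.univ.erase t, (if ε s then (-1 : ℂ) else 1) := by
    apply Finset.prod_congr rfl
    intro s hs
    rw [Function.update_of_ne (Finset.mem_erase.mp hs).1]
  rw [hrest, Function.update_self]
  cases hb : ε t <;> simp

lemma pairflip {k : ℕ} (hkD : 2 * k ≤ D) (ε : Fin k → Bool) (t : Fin k) :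
    HC.flp (posF hkD t (ε t)) (vE x ε)
      = HC.flp (posF hkD t (!(ε t))) (vE x (Function.update ε t (!(ε t)))) := by
  set ε' := Function.update ε t (!(ε t)) with hε'
  have hε't : ε' t = !(ε t) := Function.update_self _ _ _
  set j : Fin D := posF hkD t (ε t) with hj
  set j' : Fin D := posF hkD t (!(ε t)) with hj'
  have hjj' : j ≠ j' := posF_ne hkD t (by cases ε t <;> simp)
  funext i
  by_cases hij : i = j
  · subst hij
    rw [HC.flp_self, HC.flp_ne hjj']
    rw [vE_full x hkD ε t, HC.zmod2_aa]
    have : vE x ε' j = x j := by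
      have : (ε t) ≠ ε' t := by rw [hε't]; cases ε t <;> simp
      exact vE_empty x hkD this
    rw [this]
  · by_cases hij' : i = j'
    · subst hij'
      rw [HC.flp_ne (fun hc => hjj' hc.symm), HC.flp_self]
      have h1 : vE x ε j' = x j' := vE_empty x hkD (by cases ε t <;> simp)
      have h2 : vE x ε' j' = x j' + 1 := by
        have := vE_full x hkD ε' t
        rw [hε't] at this
        exact this
      rw [h1, h2, HC.zmod2_aa]
    · rw [HC.flp_ne hij, HC.flp_ne hij']
      unfold vE
      have hcond : (∃ s : Fin k, pnat s.val (ε s) = i.val) ↔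
          (∃ s : Fin k, pnat s.val (ε' s) = i.val) := by
        constructor
        · rintro ⟨s, hs⟩
          have hst : s ≠ t := by
            intro hc; subst hc
            exact hij (Fin.ext hs.symm)
          exact ⟨s, by rwa [hε', Function.update_of_ne hst]⟩
        · rintro ⟨s, hs⟩
          have hst : s ≠ t := by
            intro hc; subst hc
            rw [hε't] at hs
            exact hij' (Fin.ext hs.symm)
          rw [hε', Function.update_of_ne hst] at hs
          exact ⟨s, hs⟩
      rw [if_congr hcond rfl rfl]

/-- one step of the pairing -/
lemma cond_step {k : ℕ} (hkD : 2 * k ≤ D) {ε : Fin k → Bool} {t : Fin k} {y : Vtx D}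
    (h1 : y (posF hkD t (ε t)) = x (posF hkD t (ε t)))
    (h2 : HC.flp (posF hkD t (ε t)) y = vE x ε) :
    y (posF hkD t (!(ε t))) = x (posF hkD t (!(ε t))) ∧
      HC.flp (posF hkD t (!(ε t))) y = vE x (Function.update ε t (!(ε t))) := by
  have hjj' : posF hkD t (!(ε t)) ≠ posF hkD t (ε t) :=
    posF_ne hkD t (by cases ε t <;> simp)
  have hy : y = HC.flp (posF hkD t (ε t)) (vE x ε) := by rw [← h2, HC.flp_flp]
  constructor
  · rw [hy, HC.flp_ne hjj']
    exact vE_empty x hkD (by cases ε t <;> simp)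
  · rw [hy, pairflip x hkD ε t, HC.flp_flp]

noncomputable def ivl {k : ℕ} (hkD : 2 * k ≤ D) (p : Fin D × (Fin k → Bool)) :
    Fin D × (Fin k → Bool) :=
  if h : ∃ t : Fin k, pnat t.val (p.2 t) = p.1.val then
    (posF hkD h.choose (!(p.2 h.choose)), Function.update p.2 h.choose (!(p.2 h.choose)))
  else p

lemma ivl_spec {k : ℕ} (hkD : 2 * k ≤ D) {ε : Fin k → Bool} {j : Fin D}
    (h : ∃ t : Fin k, pnat t.val (ε t) = j.val) :
    ∀ t : Fin k, pnat t.val (ε t) = j.val →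
      ivl hkD (j, ε) = (posF hkD t (!(ε t)), Function.update ε t (!(ε t))) ∧
        j = posF hkD t (ε t) := by
  intro t ht
  have hch : h.choose = t := by
    have hs := h.choose_spec
    have := pnat_inj (hs.trans ht.symm)
    exact Fin.ext this.1
  constructor
  · unfold ivl
    rw [dif_pos h, hch]
  · exact Fin.ext ht.symm

lemma opL_hvec {k : ℕ} (hkD : 2 * k ≤ D) : HC.opL x (hvec x k) = 0 := by
  classical
  funext y
  show ∑ j ∈ Finset.univ.filter (fun j => y j = x j), hvec x k (HC.flp j y) = 0
  set F : Fin D × (Fin k → Bool) → ℂ :=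
    fun p => if y p.1 = x p.1 ∧ HC.flp p.1 y = vE x p.2 then sgn p.2 else 0 with hF
  have hrw : ∀ j : Fin D, (if y j = x j then hvec x k (HC.flp j y) else 0)
      = ∑ ε : Fin k → Bool, F (j, ε) := by
    intro j
    by_cases hj : y j = x j
    · rw [if_pos hj]
      unfold hvec
      apply Finset.sum_congr rfl
      intro ε _
      by_cases hfe : HC.flp j y = vE x ε
      · simp [hF, hj, hfe]
      · simp [hF, hj, hfe]
    · rw [if_neg hj]
      symm
      apply Finset.sum_eq_zero
      intro ε _
      simp [hF, hj]
  rw [Finset.sum_filter, Finset.sum_congr rfl (fun j _ => hrw j), ← Fintype.sum_prod_type]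
  -- F p ≠ 0 implies the existence condition
  have hact : ∀ p : Fin D × (Fin k → Bool), F p ≠ 0 →
      ∃ t : Fin k, pnat t.val (p.2 t) = p.1.val := by
    intro p hp
    by_contra hex
    apply hp
    rw [hF]
    simp only
    rw [if_neg]
    rintro ⟨hc1, hc2⟩
    have : vE x p.2 p.1 = y p.1 + 1 := by rw [← hc2, HC.flp_self]
    rw [hc1] at this
    exact hex ((vE_ne_iff x p.2 p.1).mp (by rw [this]; exact HC.zmod2_ne _))
  have key : ∀ p : Fin D × (Fin k → Bool),
      (∃ t : Fin k, pnat t.val (p.2 t) = p.1.val) → F p + F (ivl hkD p) = 0 ∧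
        ivl hkD (ivl hkD p) = p := by
    rintro ⟨j, ε⟩ h
    obtain ⟨t, ht⟩ := h
    obtain ⟨hq0, hjp0⟩ := ivl_spec hkD ⟨t, ht⟩ t ht
    set ε' := Function.update ε t (!(ε t)) with hε'
    have hq : ivl hkD (j, ε) = (posF hkD t (!(ε t)), ε') := hq0
    have hjp : j = posF hkD t (ε t) := hjp0
    have hε't : ε' t = !(ε t) := Function.update_self _ _ _
    have hb1 : Bool.not (ε' t) = ε t := by rw [hε't, Bool.not_not]
    have hb2 : Function.update ε' t (Bool.not (ε' t)) = ε := by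
      rw [hb1, hε', Function.update_idem, Function.update_eq_self]
    have ht2 : pnat t.val (ε' t) = (posF hkD t (!(ε t))).val := by rw [hε't]; rfl
    obtain ⟨hq0', _⟩ := ivl_spec hkD ⟨t, ht2⟩ t ht2
    have hq' : ivl hkD (posF hkD t (!(ε t)), ε')
        = (posF hkD t (!(ε' t)), Function.update ε' t (!(ε' t))) := hq0'
    have hback : ivl hkD (ivl hkD (j, ε)) = (j, ε) := by
      rw [hq, hq', hb2]
      show (posF hkD t (Bool.not (ε' t)), ε) = (j, ε)
      rw [hb1, ← hjp]
    refine ⟨?_, hback⟩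
    rw [hq]
    have hiff : (y j = x j ∧ HC.flp j y = vE x ε) ↔
        (y (posF hkD t (!(ε t))) = x (posF hkD t (!(ε t))) ∧
          HC.flp (posF hkD t (!(ε t))) y = vE x ε') := by
      constructor
      · rintro ⟨h1, h2⟩
        rw [hjp] at h1 h2
        exact cond_step x hkD h1 h2
      · rintro ⟨h1, h2⟩
        rw [← hε't] at h1 h2
        have hcs := cond_step x hkD h1 h2
        rw [hb1] at hcs
        have hupd : Function.update ε' t (ε t) = ε := by
          rw [hε', Function.update_idem, Function.update_eq_self]
        rw [hupd] at hcs
        rw [hjp]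
        exact hcs
    rw [hF]
    simp only
    by_cases hc : y j = x j ∧ HC.flp j y = vE x ε
    · rw [if_pos hc, if_pos (hiff.mp hc), hε', sgn_update]
      ring
    · rw [if_neg hc, if_neg (fun hc2 => hc (hiff.mpr hc2))]
      ring
  apply Finset.sum_involution (fun p _ => ivl hkD p)
  · intro p _
    by_cases h : ∃ t : Fin k, pnat t.val (p.2 t) = p.1.val
    · exact (key p h).1
    · have hivl : ivl hkD p = p := dif_neg h
      rw [hivl]
      have : F p = 0 := by
        by_contra hc
        exact h (hact p hc)
      rw [this]; ring
  · intro p _ hp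
    obtain ⟨t, ht⟩ := hact p hp
    obtain ⟨j, ε⟩ := p
    obtain ⟨hq0, _⟩ := ivl_spec hkD ⟨t, ht⟩ t ht
    have hq : ivl hkD (j, ε) = (posF hkD t (!(ε t)), Function.update ε t (!(ε t))) := hq0
    rw [hq]
    intro hc
    have hc2 := congrArg Prod.snd hc
    simp only at hc2
    have hc3 := congrFun hc2 t
    rw [Function.update_self] at hc3
    cases hεt : ε t <;> rw [hεt] at hc3 <;> simp at hc3
  · intro p _; exact Finset.mem_univ _
  · intro p _
    by_cases h : ∃ t : Fin k, pnat t.val (p.2 t) = p.1.val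
    · exact (key p h).2
    · have hivl : ivl hkD p = p := dif_neg h
      rw [hivl, hivl]

end Harm

namespace HC
open Finset

variable {D : ℕ} (x : Vtx D)

noncomputable def itR (v : Vtx D → ℂ) : ℕ → Vtx D → ℂ
  | 0 => v
  | j + 1 => opR x (itR v j)

/-- the sl2 coefficient -/
noncomputable def cc (D m j : ℕ) : ℂ := (j : ℂ) * ((D : ℂ) - 2 * m - j + 1)

lemma suppOn_itR {v : Vtx D → ℂ} {m : ℕ} (hv : SuppOn x v m) :
    ∀ j, SuppOn x (itR x v j) (m + j)
  | 0 => hv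
  | j + 1 => suppOn_opR x (suppOn_itR hv j)

lemma diag_eig {f : Vtx D → ℂ} {m : ℕ} (hs : SuppOn x f m) (y : Vtx D) :
    ((D : ℂ) - 2 * wt x y) * f y = ((D : ℂ) - 2 * m) * f y := by
  by_cases h : wt x y = m
  · rw [h]
  · rw [hs y h, mul_zero, mul_zero]

lemma opL_itR {v : Vtx D → ℂ} {m : ℕ} (hv : opL x v = 0) (hs : SuppOn x v m) :
    ∀ j, opL x (itR x v (j + 1)) = cc D m (j + 1) • itR x v j := by
  intro j
  induction j with
  | zero =>
      funext y
      show opL x (opR x v) y = _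
      rw [commLR, hv, opR_zero]
      simp only [Pi.zero_apply, zero_add, Pi.smul_apply, smul_eq_mul]
      rw [diag_eig x hs y]
      show _ = cc D m 1 * v y
      unfold cc
      push_cast
      ring
  | succ j ih =>
      funext y
      show opL x (opR x (itR x v (j+1))) y = _
      rw [commLR, ih]
      have hsup : SuppOn x (itR x v (j+1)) (m + (j+1)) := suppOn_itR x hs (j+1)
      have h1 : opR x (cc D m (j + 1) • itR x v j) y
          = cc D m (j+1) * itR x v (j+1) y := by
        rw [opR_smul]
        simp only [Pi.smul_apply, smul_eq_mul]
        rfl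
      rw [h1, diag_eig x hsup y]
      show _ = cc D m (j+2) * itR x v (j+1) y
      unfold cc
      push_cast
      ring

lemma cc_ne_zero_of_lt {m j : ℕ} (hD : (D : ℤ) - 2 * m - j + 1 < 0) (hj : 1 ≤ j) :
    cc D m j ≠ 0 := by
  unfold cc
  apply mul_ne_zero
  · exact Nat.cast_ne_zero.mpr (by omega)
  · have he : (D : ℂ) - 2 * m - j + 1 = (((D : ℤ) - 2 * m - j + 1 : ℤ) : ℂ) := by push_cast; ring
    rw [he]
    exact Int.cast_ne_zero.mpr (by omega)

lemma cc_ne_zero_of_pos {m j : ℕ} (hD : 0 < (D : ℤ) - 2 * m - j + 1) (hj : 1 ≤ j) :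
    cc D m j ≠ 0 := by
  unfold cc
  apply mul_ne_zero
  · exact Nat.cast_ne_zero.mpr (by omega)
  · have he : (D : ℂ) - 2 * m - j + 1 = (((D : ℤ) - 2 * m - j + 1 : ℤ) : ℂ) := by push_cast; ring
    rw [he]
    exact Int.cast_ne_zero.mpr (by omega)

lemma top_zero {v : Vtx D → ℂ} {m : ℕ} (hv : opL x v = 0) (hs : SuppOn x v m)
    (hm : D < 2 * m) : v = 0 := by
  by_cases hmD : D < m
  · funext y
    have := wt_le x y
    exact hs y (by omega)
  push_neg at hmD
  set N := D + 1 - m with hN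
  have hNz : itR x v N = 0 := by
    funext y
    apply suppOn_itR x hs N y
    have := wt_le x y
    omega
  have hstep : ∀ j, itR x v (j + 1) = 0 → itR x v j = 0 := by
    intro j hj
    have h0 : cc D m (j + 1) • itR x v j = 0 := by
      rw [← opL_itR x hv hs j, hj, opL_zero]
    have hcc : cc D m (j + 1) ≠ 0 := cc_ne_zero_of_lt (by omega) (by omega)
    rcases smul_eq_zero.mp h0 with h | h
    · exact absurd h hcc
    · exact h
  have hall : ∀ p, itR x v (N - p) = 0 := by
    intro p
    induction p with
    | zero => simpa using hNz
    | succ p ih =>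
        by_cases hnp : p < N
        · have he : N - p = (N - (p + 1)) + 1 := by omega
          rw [he] at ih
          exact hstep _ ih
        · rw [show N - (p + 1) = N - p from by omega]
          exact ih
  have := hall N
  simpa [itR] using this

end HC

namespace HC
open Finset

variable {D : ℕ} (x : Vtx D) (k : ℕ)

/-- the string of vectors -/
noncomputable def uvec (j : ℕ) : Vtx D → ℂ := itR x (Harm.hvec x k) j

lemma uvec_suppOn (hkD : 2 * k ≤ D) (j : ℕ) : SuppOn x (uvec x k j) (k + j) :=
  suppOn_itR x (Harm.hvec_suppOn x hkD) j

lemma uvec_succ (j : ℕ) : uvec x k (j + 1) = opR x (uvec x k j) := rfl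

lemma opL_uvec (hkD : 2 * k ≤ D) (j : ℕ) :
    opL x (uvec x k (j + 1)) = cc D k (j + 1) • uvec x k j :=
  opL_itR x (Harm.opL_hvec x hkD) (Harm.hvec_suppOn x hkD) j

lemma uvec_top (hkD : 2 * k ≤ D) : uvec x k (D - 2 * k + 1) = 0 := by
  set j0 := D - 2 * k with hj0
  have hcast : ((j0 : ℕ) : ℂ) = (D : ℂ) - 2 * k := by
    rw [hj0, Nat.cast_sub hkD]; push_cast; ring
  have hcc0 : cc D k (j0 + 1) = 0 := by
    unfold cc
    push_cast
    rw [hcast]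
    ring
  have hLz : opL x (uvec x k (j0 + 1)) = 0 := by
    rw [opL_uvec x k hkD j0, hcc0, zero_smul]
  exact top_zero x hLz (uvec_suppOn x k hkD (j0 + 1)) (by omega)

lemma uvec_zero_ge (hkD : 2 * k ≤ D) : ∀ j, D - 2 * k + 1 ≤ j → uvec x k j = 0 := by
  intro j hj
  obtain ⟨d, rfl⟩ := Nat.exists_eq_add_of_le hj
  induction d with
  | zero => simpa using uvec_top x k hkD
  | succ d ih =>
      have : uvec x k (D - 2 * k + 1 + (d + 1)) = opR x (uvec x k (D - 2 * k + 1 + d)) := rfl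
      rw [this, ih (by omega), opR_zero]

lemma uvec_ne (hkD : 2 * k ≤ D) : ∀ j, j ≤ D - 2 * k → uvec x k j ≠ 0 := by
  intro j
  induction j with
  | zero => intro _; exact Harm.hvec_ne_zero x hkD
  | succ j ih =>
      intro hj hz
      have h0 : cc D k (j + 1) • uvec x k j = 0 := by
        rw [← opL_uvec x k hkD j, hz, opL_zero]
      have hcc : cc D k (j + 1) ≠ 0 := cc_ne_zero_of_pos (by omega) (by omega)
      rcases smul_eq_zero.mp h0 with h | h
      · exact hcc h
      · exact ih (by omega) h

end HC

namespace HC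
open Finset

variable {D : ℕ}

lemma cast_hammingNorm (v : Vtx D) : ((hammingNorm v : ℕ) : ZMod 2) = ∑ i, v i := by
  have h1 : ∑ i, v i = ∑ i ∈ Finset.univ.filter (fun i => v i ≠ 0), v i := by
    symm
    apply Finset.sum_filter_of_ne
    intro i _ hvi
    exact hvi
  have h2 : ∑ i ∈ Finset.univ.filter (fun i => v i ≠ 0), v i
      = ∑ _i ∈ Finset.univ.filter (fun i => v i ≠ 0), (1 : ZMod 2) := by
    apply Finset.sum_congr rfl
    intro i hi
    exact (zmod2_ne_zero _).mp (Finset.mem_filter.mp hi).2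
  rw [h1, h2, Finset.sum_const, nsmul_eq_mul, mul_one]
  rfl

lemma even_iff_cast (n : ℕ) : Even n ↔ ((n : ZMod 2) = 0) := by
  have h : Even n ↔ 2 ∣ n := ⟨fun ⟨r, hr⟩ => ⟨r, by omega⟩, fun ⟨r, hr⟩ => ⟨r, by omega⟩⟩
  rw [h]
  exact (ZMod.natCast_eq_zero_iff n 2).symm

lemma parity_transfer {a b : Vtx D} (ha : Even (hammingNorm a))
    (hab : Even (hammingNorm (a - b))) : Even (hammingNorm b) := by
  rw [even_iff_cast] at ha hab ⊢
  rw [cast_hammingNorm] at ha hab ⊢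
  have : ∑ i, (a - b) i = ∑ i, a i - ∑ i, b i := by
    rw [← Finset.sum_sub_distrib]; rfl
  rw [this, ha] at hab
  linear_combination -hab

/-- pointwise description of a double flip -/
lemma flp2_apply {j l : Fin D} (hjl : j ≠ l) (y : Vtx D) (i : Fin D) :
    flp l (flp j y) i = if i = j ∨ i = l then y i + 1 else y i := by
  by_cases hij : i = j
  · subst hij
    rw [flp_ne hjl, flp_self, if_pos (Or.inl rfl)]
  · by_cases hil : i = l
    · subst hil
      rw [flp_self, flp_ne (fun hc => hij hc), if_pos (Or.inr rfl)]
    · rw [flp_ne hil, flp_ne hij, if_neg (by tauto)]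

lemma flp2_diff {j l : Fin D} (hjl : j ≠ l) (y : Vtx D) :
    Finset.univ.filter (fun i => y i ≠ flp l (flp j y) i) = {j, l} := by
  ext i
  simp only [Finset.mem_filter, Finset.mem_univ, true_and, Finset.mem_insert,
    Finset.mem_singleton]
  rw [flp2_apply hjl]
  by_cases hi : i = j ∨ i = l
  · rw [if_pos hi]
    constructor
    · intro _; exact hi
    · intro _; exact fun hc => zmod2_ne _ hc.symm
  · rw [if_neg hi]
    simpa using hi

lemma flp2_dist {j l : Fin D} (hjl : j ≠ l) (y : Vtx D) :
    hammingNorm (y - flp l (flp j y)) = 2 := by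
  rw [← neg_add_eq_sub, ← hammingDist_eq_hammingNorm, hammingDist_comm]
  show (Finset.univ.filter (fun i => y i ≠ flp l (flp j y) i)).card = 2
  rw [flp2_diff hjl]
  rw [Finset.card_insert_of_notMem (by simpa using hjl), Finset.card_singleton]

lemma flp2_of_diff {y z : Vtx D} {a b : Fin D} (hab : a ≠ b)
    (h : Finset.univ.filter (fun i => y i ≠ z i) = {a, b}) :
    flp b (flp a y) = z := by
  funext i
  rw [flp2_apply hab]
  have hmem : ∀ i : Fin D, y i ≠ z i ↔ (i = a ∨ i = b) := by
    intro i
    constructor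
    · intro hi
      have : i ∈ Finset.univ.filter (fun i => y i ≠ z i) := by simp [hi]
      rw [h] at this
      simpa using this
    · intro hi
      have : i ∈ ({a, b} : Finset (Fin D)) := by simpa using hi
      rw [← h] at this
      simpa using this
  by_cases hi : i = a ∨ i = b
  · rw [if_pos hi]
    have := (hmem i).mpr hi
    exact ((zmod2_ne_iff _ _).mp (fun hc => this hc.symm)).symm
  · rw [if_neg hi]
    by_contra hc
    exact hi ((hmem i).mp (fun hc2 => hc hc2))

end HC

namespace HC
open Finset

variable {D : ℕ}

open Finset

/-- the key counting identity for the halved-cube adjacency matrix -/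
lemma adj_mulVec (f : Vtx D → ℂ) (y : HVtx D) :
    (adjHalf D).mulVec (fun z : HVtx D => f z.val) y
      = (2 : ℂ)⁻¹ * ((∑ j, ∑ l, f (flp l (flp j y.val))) - D * f y.val) := by
  classical
  -- step 0 : the matrix-vector product as an indicator sum over the subtype
  have h0 : (adjHalf D).mulVec (fun z : HVtx D => f z.val) y
      = ∑ z : HVtx D, (if hammingNorm (y.val - z.val) = 2 then f z.val else 0) := by
    unfold Matrix.mulVec dotProduct adjHalf
    apply Finset.sum_congr rfl
    intro z _
    by_cases h : hammingNorm (y.val - z.val) = 2 <;> simp [h]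
  -- step 1 : replace the subtype sum by a sum over the whole cube
  have h1 : ∑ z : HVtx D, (if hammingNorm (y.val - z.val) = 2 then f z.val else 0)
      = ∑ z : Vtx D, (if hammingNorm (y.val - z) = 2 then f z else 0) := by
    rw [← Finset.sum_subtype (Finset.univ.filter (fun z : Vtx D => Even (hammingNorm z)))
      (by intro z; simp) (fun z => if hammingNorm (y.val - z) = 2 then f z else 0)]
    apply Finset.sum_subset (Finset.filter_subset _ _)
    intro z _ hz
    simp only [mem_filter, mem_univ, true_and] at hz
    rw [if_neg]
    intro hc
    exact hz (parity_transfer y.property (by rw [hc]; exact ⟨1, rfl⟩))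
  -- step 2 : the sphere of radius 2
  set sph2 : Finset (Vtx D) := Finset.univ.filter (fun z => hammingNorm (y.val - z) = 2)
    with hsph2
  have h2 : ∑ z : Vtx D, (if hammingNorm (y.val - z) = 2 then f z else 0)
      = ∑ z ∈ sph2, f z := (Finset.sum_filter _ _).symm
  -- step 3 : diagonal part of the double sum
  have h3 : ∑ j, ∑ l, f (flp l (flp j y.val))
      = (D : ℂ) * f y.val + ∑ j, ∑ l ∈ univ.erase j, f (flp l (flp j y.val)) := by
    have : ∀ j : Fin D, ∑ l, f (flp l (flp j y.val))
        = f y.val + ∑ l ∈ univ.erase j, f (flp l (flp j y.val)) := by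
      intro j
      rw [← Finset.add_sum_erase univ _ (mem_univ j), flp_flp]
    rw [Finset.sum_congr rfl (fun j _ => this j), Finset.sum_add_distrib, Finset.sum_const,
      card_univ, Fintype.card_fin, nsmul_eq_mul]
  -- step 4 : the off-diagonal part double counts the sphere
  set s : Finset (Fin D × Fin D) := (univ ×ˢ univ).filter (fun p => p.1 ≠ p.2) with hs
  have h4 : ∑ j, ∑ l ∈ univ.erase j, f (flp l (flp j y.val))
      = ∑ p ∈ s, f (flp p.2 (flp p.1 y.val)) := by
    rw [hs, Finset.sum_filter, Finset.sum_product]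
    apply Finset.sum_congr rfl
    intro j _
    rw [← Finset.sum_filter, Finset.filter_ne]
  have hmaps : ∀ p ∈ s, flp p.2 (flp p.1 y.val) ∈ sph2 := by
    rintro ⟨j, l⟩ hp
    simp only [hs, mem_filter, mem_product, mem_univ, true_and] at hp
    simp only [hsph2, mem_filter, mem_univ, true_and]
    exact flp2_dist hp y.val
  have h5 : ∑ z ∈ sph2, ∑ p ∈ s.filter (fun p => flp p.2 (flp p.1 y.val) = z),
        f (flp p.2 (flp p.1 y.val)) = ∑ p ∈ s, f (flp p.2 (flp p.1 y.val)) :=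
    Finset.sum_fiberwise_of_maps_to hmaps _
  have h6 : ∀ z ∈ sph2, (s.filter (fun p => flp p.2 (flp p.1 y.val) = z)).card = 2 := by
    intro z hz
    simp only [hsph2, mem_filter, mem_univ, true_and] at hz
    have hz2 : (Finset.univ.filter (fun i => y.val i ≠ z i)).card = 2 := by
      show hammingDist y.val z = 2
      rw [hammingDist_comm, hammingDist_eq_hammingNorm, neg_add_eq_sub]; exact hz
    obtain ⟨a, b, hab, hset⟩ := Finset.card_eq_two.mp hz2
    have hfib : s.filter (fun p => flp p.2 (flp p.1 y.val) = z)
        = {(a, b), (b, a)} := by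
      ext ⟨j, l⟩
      simp only [hs, mem_filter, mem_product, mem_univ, true_and, mem_insert,
        mem_singleton, Prod.mk.injEq]
      constructor
      · rintro ⟨hjl, hflp⟩
        have hdiff : Finset.univ.filter (fun i => y.val i ≠ z i) = {j, l} := by
          rw [← hflp]; exact flp2_diff hjl y.val
        rw [hset] at hdiff
        have hj : j ∈ ({a, b} : Finset (Fin D)) := by rw [hdiff]; simp
        have hl : l ∈ ({a, b} : Finset (Fin D)) := by rw [hdiff]; simp
        simp only [mem_insert, mem_singleton] at hj hl
        rcases hj with hj | hj <;> rcases hl with hl | hl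
        · exact absurd (hj.trans hl.symm) hjl
        · exact Or.inl ⟨hj, hl⟩
        · exact Or.inr ⟨hj, hl⟩
        · exact absurd (hj.trans hl.symm) hjl
      · rintro (⟨hj, hl⟩ | ⟨hj, hl⟩)
        · subst hj; subst hl
          exact ⟨hab, flp2_of_diff hab hset⟩
        · subst hj; subst hl
          refine ⟨hab.symm, flp2_of_diff hab.symm ?_⟩
          rw [hset]
          ext i; simp only [mem_insert, mem_singleton]; tauto
    rw [hfib, Finset.card_insert_of_notMem (by simp [Prod.ext_iff]; intro hc; exact absurd hc hab),
      Finset.card_singleton]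
  have h7 : ∑ p ∈ s, f (flp p.2 (flp p.1 y.val)) = ∑ z ∈ sph2, 2 * f z := by
    rw [← h5]
    apply Finset.sum_congr rfl
    intro z hz
    have : ∀ p ∈ s.filter (fun p => flp p.2 (flp p.1 y.val) = z),
        f (flp p.2 (flp p.1 y.val)) = f z := by
      intro p hp
      rw [(Finset.mem_filter.mp hp).2]
    rw [Finset.sum_congr rfl this, Finset.sum_const, h6 z hz]
    simp [nsmul_eq_mul]
  have h8 : ∑ z ∈ sph2, 2 * f z = 2 * ∑ z ∈ sph2, f z := by rw [← Finset.mul_sum]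
  rw [h0, h1, h2, h3, h4, h7, h8]
  field_simp
  ring

end HC

namespace HC
open Finset

open Finset

variable {D : ℕ} (x : Vtx D)

lemma SS_split (f : Vtx D → ℂ) (y : Vtx D) :
    ∑ j, ∑ l, f (flp l (flp j y))
      = opL x (opL x f) y + opL x (opR x f) y + opR x (opL x f) y + opR x (opR x f) y := by
  have hsplit : ∀ (g : Vtx D → ℂ) (w : Vtx D), ∑ j, g (flp j w) = opL x g w + opR x g w := by
    intro g w
    exact (Finset.sum_filter_add_sum_filter_not univ (fun j => w j = x j) _).symm
  have h1 : ∑ j, ∑ l, f (flp l (flp j y)) = ∑ j, (opL x f (flp j y) + opR x f (flp j y)) :=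
    Finset.sum_congr rfl (fun j _ => hsplit f (flp j y))
  rw [h1, Finset.sum_add_distrib, hsplit (opL x f) y, hsplit (opR x f) y]
  ring

variable (k : ℕ)

lemma SS_uvec_zero (hkD : 2 * k ≤ D) (y : Vtx D) :
    ∑ j, ∑ l, uvec x k 0 (flp l (flp j y))
      = (cc D k 1) * uvec x k 0 y + uvec x k 2 y := by
  rw [SS_split]
  have hL : opL x (uvec x k 0) = 0 := Harm.opL_hvec x hkD
  have hLR : opL x (opR x (uvec x k 0)) = cc D k 1 • uvec x k 0 := by
    rw [← uvec_succ]
    exact opL_uvec x k hkD 0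
  rw [hL, hLR, opL_zero, opR_zero]
  simp only [Pi.zero_apply, Pi.smul_apply, smul_eq_mul]
  show 0 + cc D k 1 * uvec x k 0 y + 0 + opR x (opR x (uvec x k 0)) y = _
  have : opR x (opR x (uvec x k 0)) = uvec x k 2 := rfl
  rw [this]
  ring

lemma SS_uvec_succ (hkD : 2 * k ≤ D) (i : ℕ) (y : Vtx D) :
    ∑ j, ∑ l, uvec x k (2 * i + 2) (flp l (flp j y))
      = (cc D k (2 * i + 2) * cc D k (2 * i + 1)) * uvec x k (2 * i) y
        + (cc D k (2 * i + 3) + cc D k (2 * i + 2)) * uvec x k (2 * i + 2) y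
        + uvec x k (2 * i + 4) y := by
  rw [SS_split]
  have e1 : opL x (uvec x k (2 * i + 2)) = cc D k (2 * i + 2) • uvec x k (2 * i + 1) :=
    opL_uvec x k hkD (2 * i + 1)
  have e2 : opL x (uvec x k (2 * i + 1)) = cc D k (2 * i + 1) • uvec x k (2 * i) :=
    opL_uvec x k hkD (2 * i)
  have hLL : opL x (opL x (uvec x k (2 * i + 2)))
      = cc D k (2 * i + 2) • (cc D k (2 * i + 1) • uvec x k (2 * i)) := by
    rw [e1, opL_smul, e2]
  have hLR : opL x (opR x (uvec x k (2 * i + 2))) = cc D k (2 * i + 3) • uvec x k (2 * i + 2) := by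
    rw [← uvec_succ]
    exact opL_uvec x k hkD (2 * i + 2)
  have hRL : opR x (opL x (uvec x k (2 * i + 2)))
      = cc D k (2 * i + 2) • uvec x k (2 * i + 2) := by
    rw [e1, opR_smul, ← uvec_succ]
  have hRR : opR x (opR x (uvec x k (2 * i + 2))) = uvec x k (2 * i + 4) := rfl
  rw [hLL, hLR, hRL, hRR]
  simp only [Pi.add_apply, Pi.smul_apply, smul_eq_mul]
  ring

/-- action of the dual adjacency matrix on a vector supported on a sphere -/
lemma dual_mulVec (x₀ : HVtx D) (v : HVtx D → ℂ) :
    (dualHalf D x₀).mulVec v = fun y => ((D : ℂ) - 2 * hammingNorm (x₀.val - y.val)) * v y := by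
  funext y
  rw [dualHalf, Matrix.mulVec_diagonal]

lemma hammingNorm_sub_eq_wt (x₀ : HVtx D) (y : HVtx D) :
    hammingNorm (x₀.val - y.val) = wt x₀.val y.val := by
  rw [wt, hammingDist_comm, hammingDist_eq_hammingNorm, neg_add_eq_sub]

end HC

namespace Main
open Finset

open HC

variable {D : ℕ} (x₀ : HVtx D) (k : ℕ)

noncomputable def wv (i : ℕ) : HVtx D → ℂ :=
  fun z => (((2 * i).factorial : ℂ))⁻¹ * uvec x₀.val k (2 * i) z.val

lemma wv_eq_smul (i : ℕ) : wv x₀ k i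
    = (((2 * i).factorial : ℂ))⁻¹ • (fun z : HVtx D => uvec x₀.val k (2 * i) z.val) := rfl

lemma wv_zero_of_ge (h2k : 2 * k ≤ D) {i : ℕ} (hi : D - 2 * k + 1 ≤ 2 * i) :
    wv x₀ k i = 0 := by
  funext z
  unfold wv
  rw [uvec_zero_ge x₀.val k h2k (2 * i) hi]
  simp

lemma dual_wv (h2k : 2 * k ≤ D) (i : ℕ) :
    (dualHalf D x₀).mulVec (wv x₀ k i)
      = ((D : ℂ) - 2 * (2 * (i : ℂ) + (k : ℂ))) • wv x₀ k i := by
  rw [dual_mulVec]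
  funext y
  simp only [Pi.smul_apply, smul_eq_mul]
  rw [hammingNorm_sub_eq_wt]
  by_cases h : wt x₀.val y.val = k + 2 * i
  · rw [h]
    unfold wv
    push_cast
    ring
  · have h0 : uvec x₀.val k (2 * i) y.val = 0 := uvec_suppOn x₀.val k h2k (2 * i) y.val h
    unfold wv
    rw [h0]
    ring

set_option maxHeartbeats 2000000 in
lemma adj_wv (h2k : 2 * k ≤ D) (i : ℕ) :
    (adjHalf D).mulVec (wv x₀ k i) =
      ((((D : ℂ) - 2 * i - 2 * k + 1) * ((D : ℂ) - 2 * i - 2 * k + 2)) / 2) •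
        (if i = 0 then 0 else wv x₀ k (i - 1)) +
      (2 * (i : ℂ) * ((D : ℂ) - 2 * i - 2 * k) - k) • wv x₀ k i +
      (((i : ℂ) + 1) * (2 * i + 1)) • wv x₀ k (i + 1) := by
  have hmv : (adjHalf D).mulVec (wv x₀ k i)
      = (((2 * i).factorial : ℂ))⁻¹ •
          (adjHalf D).mulVec (fun z : HVtx D => uvec x₀.val k (2 * i) z.val) := by
    rw [wv_eq_smul, Matrix.mulVec_smul]
  have hfac0 : (((2 * i).factorial : ℕ) : ℂ) ≠ 0 := Nat.cast_ne_zero.mpr (Nat.factorial_ne_zero _)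
  have hfac1 : (((2 * (i + 1)).factorial : ℕ) : ℂ)
      = (2 * (i : ℂ) + 2) * (2 * (i : ℂ) + 1) * (((2 * i).factorial : ℕ) : ℂ) := by
    rw [show 2 * (i + 1) = (2 * i + 1) + 1 from by ring, Nat.factorial_succ, Nat.factorial_succ]
    push_cast
    ring
  rcases Nat.eq_zero_or_pos i with hi | hi
  · subst hi
    rw [if_pos rfl]
    funext y
    rw [hmv]
    simp only [Pi.smul_apply, Pi.add_apply, smul_eq_mul, Pi.zero_apply]
    rw [adj_mulVec (uvec x₀.val k (2 * 0)) y]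
    rw [show (2 * 0 : ℕ) = 0 from rfl] at *
    rw [SS_uvec_zero x₀.val k h2k y.val]
    have h2 : wv x₀ k 1 y = (((2 * 1).factorial : ℕ) : ℂ)⁻¹ * uvec x₀.val k 2 y.val := rfl
    have h00 : wv x₀ k 0 y = ((Nat.factorial 0 : ℕ) : ℂ)⁻¹ * uvec x₀.val k 0 y.val := rfl
    rw [h2, h00]
    unfold cc
    norm_num [Nat.factorial]
    ring
  · obtain ⟨i', rfl⟩ : ∃ i', i = i' + 1 := ⟨i - 1, by omega⟩
    rw [if_neg (by omega)]
    have hfac2 : (((2 * i' + 4).factorial : ℕ) : ℂ)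
        = (2 * (i' : ℂ) + 4) * (2 * (i' : ℂ) + 3) * (((2 * i' + 2).factorial : ℕ) : ℂ) := by
      rw [show (2 * i' + 4 : ℕ) = (2 * i' + 2 + 1) + 1 from by ring, Nat.factorial_succ,
        Nat.factorial_succ]
      push_cast
      ring
    have hfac1' : (((2 * i' + 2).factorial : ℕ) : ℂ)
        = (2 * (i' : ℂ) + 2) * (2 * (i' : ℂ) + 1) * (((2 * i').factorial : ℕ) : ℂ) := by
      rw [show (2 * i' + 2 : ℕ) = (2 * i' + 1) + 1 from by ring, Nat.factorial_succ,
        Nat.factorial_succ]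
      push_cast
      ring
    have hne0 : (((2 * i').factorial : ℕ) : ℂ) ≠ 0 := Nat.cast_ne_zero.mpr (Nat.factorial_ne_zero _)
    have hz1 : (2 * (i' : ℂ) + 1) ≠ 0 := by
      have : (2 * (i' : ℂ) + 1) = ((2 * i' + 1 : ℕ) : ℂ) := by push_cast; ring
      rw [this]; exact Nat.cast_ne_zero.mpr (by omega)
    have hz2 : (2 * (i' : ℂ) + 2) ≠ 0 := by
      have : (2 * (i' : ℂ) + 2) = ((2 * i' + 2 : ℕ) : ℂ) := by push_cast; ring
      rw [this]; exact Nat.cast_ne_zero.mpr (by omega)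
    have hz3 : (2 * (i' : ℂ) + 3) ≠ 0 := by
      have : (2 * (i' : ℂ) + 3) = ((2 * i' + 3 : ℕ) : ℂ) := by push_cast; ring
      rw [this]; exact Nat.cast_ne_zero.mpr (by omega)
    have hz4 : (2 * (i' : ℂ) + 4) ≠ 0 := by
      have : (2 * (i' : ℂ) + 4) = ((2 * i' + 4 : ℕ) : ℂ) := by push_cast; ring
      rw [this]; exact Nat.cast_ne_zero.mpr (by omega)
    funext y
    rw [hmv]
    simp only [Pi.smul_apply, Pi.add_apply, smul_eq_mul]
    rw [adj_mulVec (uvec x₀.val k (2 * (i' + 1))) y]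
    rw [show (2 * (i' + 1) : ℕ) = 2 * i' + 2 from by ring]
    rw [SS_uvec_succ x₀.val k h2k i' y.val]
    have ha : wv x₀ k (i' + 1 - 1) y
        = (((2 * i').factorial : ℕ) : ℂ)⁻¹ * uvec x₀.val k (2 * i') y.val := rfl
    have hb : wv x₀ k (i' + 1) y
        = (((2 * i' + 2).factorial : ℕ) : ℂ)⁻¹ * uvec x₀.val k (2 * i' + 2) y.val := by
      show (((2 * (i' + 1)).factorial : ℕ) : ℂ)⁻¹ * uvec x₀.val k (2 * (i' + 1)) y.val = _
      rw [show (2 * (i' + 1) : ℕ) = 2 * i' + 2 from by ring]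
    have hc : wv x₀ k (i' + 1 + 1) y
        = (((2 * i' + 4).factorial : ℕ) : ℂ)⁻¹ * uvec x₀.val k (2 * i' + 4) y.val := by
      show (((2 * (i' + 1 + 1)).factorial : ℕ) : ℂ)⁻¹ * uvec x₀.val k (2 * (i' + 1 + 1)) y.val = _
      rw [show (2 * (i' + 1 + 1) : ℕ) = 2 * i' + 4 from by ring]
    rw [ha, hb, hc]
    have hγ : (2 : ℂ)⁻¹ * (((2 * i' + 2).factorial : ℕ) : ℂ)⁻¹
          * (cc D k (2 * i' + 2) * cc D k (2 * i' + 1))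
        = ((((D : ℂ) - 2 * (↑(i' + 1) : ℂ) - 2 * k + 1)
            * ((D : ℂ) - 2 * (↑(i' + 1) : ℂ) - 2 * k + 2)) / 2)
          * (((2 * i').factorial : ℕ) : ℂ)⁻¹ := by
      unfold cc
      rw [hfac1']
      push_cast
      field_simp
      ring
    have hα : (2 : ℂ)⁻¹ * (cc D k (2 * i' + 3) + cc D k (2 * i' + 2) - (D : ℂ))
        = 2 * (↑(i' + 1) : ℂ) * ((D : ℂ) - 2 * (↑(i' + 1) : ℂ) - 2 * k) - k := by
      unfold cc
      push_cast
      ring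
    have hβ : (2 : ℂ)⁻¹ * (((2 * i' + 2).factorial : ℕ) : ℂ)⁻¹
        = (((↑(i' + 1) : ℂ) + 1) * (2 * (↑(i' + 1) : ℂ) + 1))
          * (((2 * i' + 4).factorial : ℕ) : ℂ)⁻¹ := by
      have hmul : (((↑(i' + 1) : ℂ) + 1) * (2 * (↑(i' + 1) : ℂ) + 1)) * 2
          = (2 * (i' : ℂ) + 4) * (2 * (i' : ℂ) + 3) := by push_cast; ring
      have hc0 : (((↑(i' + 1) : ℂ) + 1) * (2 * (↑(i' + 1) : ℂ) + 1)) ≠ 0 := by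
        have he : (((↑(i' + 1) : ℂ) + 1) * (2 * (↑(i' + 1) : ℂ) + 1))
            = (((i' + 2) * (2 * i' + 3) : ℕ) : ℂ) := by push_cast; ring
        rw [he]
        exact Nat.cast_ne_zero.mpr (Nat.mul_ne_zero (by omega) (by omega))
      rw [hfac2, ← hmul, mul_inv, mul_inv, mul_assoc ((((↑(i' + 1) : ℂ) + 1)
        * (2 * (↑(i' + 1) : ℂ) + 1)))⁻¹, mul_inv_cancel_left₀ hc0]
    linear_combination (uvec x₀.val k (2 * i') y.val) * hγ
      + ((((2 * i' + 2).factorial : ℕ) : ℂ)⁻¹ * uvec x₀.val k (2 * i' + 2) y.val) * hα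
      + (uvec x₀.val k (2 * i' + 4) y.val) * hβ
end Main

namespace Main
open Finset

open HC

variable {D : ℕ} (x₀ : HVtx D) (k : ℕ)

lemma theta_sub_ne {i m : ℕ} (him : i ≠ m) :
    ((D : ℂ) - 2 * (2 * (i : ℂ) + (k : ℂ))) - ((D : ℂ) - 2 * (2 * (m : ℂ) + (k : ℂ))) ≠ 0 := by
  intro hc
  apply him
  have h4 : (4 : ℂ) ≠ 0 := by norm_num
  have : (4 : ℂ) * ((m : ℂ) - (i : ℂ)) = 0 := by linear_combination hc
  rcases mul_eq_zero.mp this with h | h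
  · exact absurd h h4
  · have : (m : ℂ) = (i : ℂ) := by linear_combination h
    exact (Nat.cast_injective this).symm

lemma dual_mulVec_sum (h2k : 2 * k ≤ D) (s : Finset ℕ) (a : ℕ → ℂ) :
    (dualHalf D x₀).mulVec (∑ j ∈ s, a j • wv x₀ k j)
      = ∑ j ∈ s, (((D : ℂ) - 2 * (2 * (j : ℂ) + (k : ℂ))) * a j) • wv x₀ k j := by
  have e : ∀ v, (dualHalf D x₀).mulVec v = (dualHalf D x₀).mulVecLin v :=
    fun v => (Matrix.mulVecLin_apply _ _).symm
  rw [e, map_sum]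
  apply Finset.sum_congr rfl
  intro j _
  rw [_root_.map_smul, ← e, dual_wv x₀ k h2k j, smul_smul, mul_comm]

lemma extract (h2k : 2 * k ≤ D) (U : Submodule ℂ (HVtx D → ℂ))
    (hU : MatInvariant (dualHalf D x₀) U) :
    ∀ s : Finset ℕ, ∀ a : ℕ → ℂ, (∑ j ∈ s, a j • wv x₀ k j) ∈ U →
      ∀ i ∈ s, a i • wv x₀ k i ∈ U := by
  intro s
  induction s using Finset.strongInduction with
  | _ s ih =>
    intro a hsum i hi
    set θ : ℕ → ℂ := fun j => (D : ℂ) - 2 * (2 * (j : ℂ) + (k : ℂ)) with hθ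
    by_cases hs : s = {i}
    · subst hs; simpa using hsum
    · have hex : ∃ m ∈ s, m ≠ i := by
        by_contra hc
        push_neg at hc
        exact hs (Finset.eq_singleton_iff_unique_mem.mpr ⟨hi, fun m hm => hc m hm⟩)
      obtain ⟨m, hm, hmi⟩ := hex
      have hv' : (∑ j ∈ s, ((θ j - θ m) * a j) • wv x₀ k j) ∈ U := by
        have h1 : (dualHalf D x₀).mulVec (∑ j ∈ s, a j • wv x₀ k j)
            - θ m • (∑ j ∈ s, a j • wv x₀ k j) ∈ U :=
          U.sub_mem (hU _ hsum) (U.smul_mem _ hsum)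
        have h2 : (dualHalf D x₀).mulVec (∑ j ∈ s, a j • wv x₀ k j)
            - θ m • (∑ j ∈ s, a j • wv x₀ k j)
            = ∑ j ∈ s, ((θ j - θ m) * a j) • wv x₀ k j := by
          rw [dual_mulVec_sum x₀ k h2k, Finset.smul_sum, ← Finset.sum_sub_distrib]
          apply Finset.sum_congr rfl
          intro j _
          rw [smul_smul, ← sub_smul]
          congr 1
          ring
        rwa [h2] at h1
      have hsum' : (∑ j ∈ s.erase m, ((θ j - θ m) * a j) • wv x₀ k j) ∈ U := by
        rwa [Finset.sum_erase s (by rw [sub_self, zero_mul, zero_smul])]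
      have hrec := ih (s.erase m) (Finset.erase_ssubset hm) _ hsum' i
        (Finset.mem_erase.mpr ⟨fun hc => hmi hc.symm, hi⟩)
      have hne : θ i - θ m ≠ 0 := theta_sub_ne k (fun hc => hmi hc.symm)
      have := U.smul_mem (θ i - θ m)⁻¹ hrec
      rwa [smul_smul, ← mul_assoc, inv_mul_cancel₀ hne, one_mul] at this

end Main

namespace Main
open Finset

open HC

variable {D : ℕ} (x₀ : HVtx D) (k : ℕ)

lemma wv_point (hk : Even k) (h2k : 2 * k ≤ D) {i : ℕ} (h2i : 2 * i ≤ D - 2 * k) :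
    ∃ y : HVtx D, wt x₀.val y.val = k + 2 * i ∧ uvec x₀.val k (2 * i) y.val ≠ 0 := by
  have hne := uvec_ne x₀.val k h2k (2 * i) h2i
  obtain ⟨z, hz⟩ := Function.ne_iff.mp hne
  simp only [Pi.zero_apply] at hz
  have hwt : wt x₀.val z = k + 2 * i := by
    by_contra hc
    exact hz (uvec_suppOn x₀.val k h2k (2 * i) z hc)
  have heven : Even (hammingNorm z) := by
    apply parity_transfer x₀.property
    have : hammingNorm (x₀.val - z) = wt x₀.val z := by
      rw [wt, hammingDist_comm, hammingDist_eq_hammingNorm, neg_add_eq_sub]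
    rw [this, hwt]
    exact hk.add (even_two_mul i)
  exact ⟨⟨z, heven⟩, hwt, hz⟩

lemma wv_ne_zero_at (h2k : 2 * k ≤ D) {i j : ℕ} {y : HVtx D}
    (hwt : wt x₀.val y.val = k + 2 * i) (hij : j ≠ i) : wv x₀ k j y = 0 := by
  unfold wv
  rw [uvec_suppOn x₀.val k h2k (2 * j) y.val (by omega), mul_zero]

lemma wv_li (hk : Even k) (h2k : 2 * k ≤ D) {n : ℕ} (hn : 2 * n ≤ D - 2 * k) :
    LinearIndependent ℂ (fun i : Fin (n + 1) => wv x₀ k i.val) := by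
  rw [Fintype.linearIndependent_iff]
  intro g hg i
  obtain ⟨y, hwt, hune⟩ := wv_point x₀ k hk h2k (i := i.val) (by have := i.isLt; omega)
  have hy := congrFun hg y
  rw [Finset.sum_apply] at hy
  rw [Finset.sum_eq_single i] at hy
  · have hwvy : wv x₀ k i.val y = (((2 * i.val).factorial : ℕ) : ℂ)⁻¹
        * uvec x₀.val k (2 * i.val) y.val := rfl
    simp only [Pi.smul_apply, smul_eq_mul, Pi.zero_apply] at hy
    rw [hwvy] at hy
    rcases mul_eq_zero.mp hy with h | h
    · exact h
    · rcases mul_eq_zero.mp h with h' | h'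
      · exact absurd h' (inv_ne_zero (Nat.cast_ne_zero.mpr (Nat.factorial_ne_zero _)))
      · exact absurd h' hune
  · intro j _ hji
    have : wv x₀ k j.val y = 0 :=
      wv_ne_zero_at x₀ k h2k hwt (fun hc => hji (Fin.ext hc))
    simp [this]
  · intro hc
    exact absurd (Finset.mem_univ i) hc

/-- one propagation step up/down through the tridiagonal action -/
lemma step_both {n : ℕ} (hk : Even k) (h2k : 2 * k ≤ D) (hn : n = D / 2 - k)
    (U : Submodule ℂ (HVtx D → ℂ))
    (hUA : MatInvariant (adjHalf D) U) (hUD : MatInvariant (dualHalf D x₀) U)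
    {i : ℕ} (hi : i ≤ n) (hwU : wv x₀ k i ∈ U) :
    wv x₀ k (i + 1) ∈ U ∧ (1 ≤ i → wv x₀ k (i - 1) ∈ U) := by
  have hβne : (((i : ℂ) + 1) * (2 * (i : ℂ) + 1)) ≠ 0 := by
    have he : (((i : ℂ) + 1) * (2 * (i : ℂ) + 1)) = (((i + 1) * (2 * i + 1) : ℕ) : ℂ) := by
      push_cast; ring
    rw [he]
    exact Nat.cast_ne_zero.mpr (Nat.mul_ne_zero (by omega) (by omega))
  have hγne : ((((D : ℂ) - 2 * i - 2 * k + 1) * ((D : ℂ) - 2 * i - 2 * k + 2)) / 2) ≠ 0 := by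
    have hb : 2 * i ≤ D := by omega
    have hab : 2 * k ≤ D - 2 * i := by omega
    have h1 : ((D : ℂ) - 2 * i - 2 * k + 1) = (((D - 2 * i - 2 * k + 1 : ℕ)) : ℂ) := by
      push_cast [Nat.cast_sub hab, Nat.cast_sub hb]
      ring
    have h2 : ((D : ℂ) - 2 * i - 2 * k + 2) = (((D - 2 * i - 2 * k + 2 : ℕ)) : ℂ) := by
      push_cast [Nat.cast_sub hab, Nat.cast_sub hb]
      ring
    rw [h1, h2]
    apply div_ne_zero
    · exact mul_ne_zero (Nat.cast_ne_zero.mpr (by omega)) (Nat.cast_ne_zero.mpr (by omega))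
    · norm_num
  -- the vector γ • X + β • w (i+1) is in U
  have hv2 : ((((D : ℂ) - 2 * i - 2 * k + 1) * ((D : ℂ) - 2 * i - 2 * k + 2)) / 2) •
        (if i = 0 then (0 : HVtx D → ℂ) else wv x₀ k (i - 1))
      + (((i : ℂ) + 1) * (2 * i + 1)) • wv x₀ k (i + 1) ∈ U := by
    have h1 : (adjHalf D).mulVec (wv x₀ k i)
        - (2 * (i : ℂ) * ((D : ℂ) - 2 * i - 2 * k) - k) • wv x₀ k i ∈ U :=
      U.sub_mem (hUA _ hwU) (U.smul_mem _ hwU)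
    rw [adj_wv x₀ k h2k i] at h1
    have heq : ((((D : ℂ) - 2 * i - 2 * k + 1) * ((D : ℂ) - 2 * i - 2 * k + 2)) / 2) •
          (if i = 0 then (0 : HVtx D → ℂ) else wv x₀ k (i - 1))
        + (2 * (i : ℂ) * ((D : ℂ) - 2 * i - 2 * k) - k) • wv x₀ k i
        + (((i : ℂ) + 1) * (2 * i + 1)) • wv x₀ k (i + 1)
        - (2 * (i : ℂ) * ((D : ℂ) - 2 * i - 2 * k) - k) • wv x₀ k i
        = ((((D : ℂ) - 2 * i - 2 * k + 1) * ((D : ℂ) - 2 * i - 2 * k + 2)) / 2) •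
          (if i = 0 then (0 : HVtx D → ℂ) else wv x₀ k (i - 1))
        + (((i : ℂ) + 1) * (2 * i + 1)) • wv x₀ k (i + 1) := by
      abel
    rwa [heq] at h1
  rcases Nat.eq_zero_or_pos i with hi0 | hipos
  · rw [if_pos hi0, smul_zero, zero_add] at hv2
    have := U.smul_mem ((((i : ℂ) + 1) * (2 * (i : ℂ) + 1)))⁻¹ hv2
    rw [smul_smul, inv_mul_cancel₀ hβne, one_smul] at this
    constructor
    · exact this
    · intro hc; omega
  · rw [if_neg (by omega)] at hv2
    -- two-term extraction
    set a : ℕ → ℂ := fun j =>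
      if j = i - 1 then ((((D : ℂ) - 2 * i - 2 * k + 1) * ((D : ℂ) - 2 * i - 2 * k + 2)) / 2)
      else (((i : ℂ) + 1) * (2 * i + 1)) with ha
    have hpair : i - 1 ≠ i + 1 := by omega
    have hsum : (∑ j ∈ ({i - 1, i + 1} : Finset ℕ), a j • wv x₀ k j) ∈ U := by
      rw [Finset.sum_pair hpair]
      have e1 : a (i - 1) = ((((D : ℂ) - 2 * i - 2 * k + 1) * ((D : ℂ) - 2 * i - 2 * k + 2)) / 2) :=
        if_pos rfl
      have e2 : a (i + 1) = (((i : ℂ) + 1) * (2 * i + 1)) := if_neg (by omega)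
      rw [e1, e2]
      exact hv2
    have hext := extract x₀ k h2k U hUD ({i - 1, i + 1} : Finset ℕ) a hsum
    constructor
    · have h1 := hext (i + 1) (by simp)
      rw [show a (i + 1) = (((i : ℂ) + 1) * (2 * i + 1)) from if_neg (by omega)] at h1
      have := U.smul_mem (((i : ℂ) + 1) * (2 * i + 1))⁻¹ h1
      rwa [smul_smul, inv_mul_cancel₀ hβne, one_smul] at this
    · intro _
      have h1 := hext (i - 1) (by simp)
      rw [show a (i - 1) = ((((D : ℂ) - 2 * i - 2 * k + 1) * ((D : ℂ) - 2 * i - 2 * k + 2)) / 2)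
        from if_pos rfl] at h1
      have := U.smul_mem (((((D : ℂ) - 2 * i - 2 * k + 1) * ((D : ℂ) - 2 * i - 2 * k + 2)) / 2))⁻¹ h1
      rwa [smul_smul, inv_mul_cancel₀ hγne, one_smul] at this

end Main


theorem stmt0 (D : ℕ) (hD : 3 ≤ D) (x₀ : HVtx D) (k : ℕ) (hk : Even k) (hkD : k ≤ D / 2) :
    ∃ W : Submodule ℂ (HVtx D → ℂ),
      Module.finrank ℂ W = D / 2 - k + 1 ∧
      MatInvariant (adjHalf D) W ∧
      MatInvariant (dualHalf D x₀) W ∧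
      (∀ U : Submodule ℂ (HVtx D → ℂ), U ≤ W →
        MatInvariant (adjHalf D) U → MatInvariant (dualHalf D x₀) U → U = ⊥ ∨ U = W) ∧
      ∃ w : ℕ → (HVtx D → ℂ),
        (∀ i ≤ D / 2 - k, w i ∈ W) ∧
        LinearIndependent ℂ (fun i : Fin (D / 2 - k + 1) => w i) ∧
        Submodule.span ℂ (w '' Set.Iic (D / 2 - k)) = W ∧
        w (D / 2 - k + 1) = 0 ∧
        (∀ i ≤ D / 2 - k,
          (adjHalf D).mulVec (w i) =
            ((((D : ℂ) - 2 * i - 2 * k + 1) * ((D : ℂ) - 2 * i - 2 * k + 2)) / 2) •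
              (if i = 0 then 0 else w (i - 1)) +
            (2 * (i : ℂ) * ((D : ℂ) - 2 * i - 2 * k) - k) • w i +
            (((i : ℂ) + 1) * (2 * i + 1)) • w (i + 1)) ∧
        (∀ i ≤ D / 2 - k,
          (dualHalf D x₀).mulVec (w i) = ((D : ℂ) - 2 * (2 * i + k)) • w i) := by
  have h2k : 2 * k ≤ D := by omega
  set n := D / 2 - k with hn
  set w : ℕ → (HVtx D → ℂ) := Main.wv x₀ k with hw
  have himg : w '' Set.Iic n = Set.range (fun i : Fin (n + 1) => w i.val) := by
    ext v
    constructor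
    · rintro ⟨j, hj, rfl⟩
      exact ⟨⟨j, by simp only [Set.mem_Iic] at hj; omega⟩, rfl⟩
    · rintro ⟨i, rfl⟩
      exact ⟨i.val, by simp only [Set.mem_Iic]; have := i.isLt; omega, rfl⟩
  set W := Submodule.span ℂ (w '' Set.Iic n) with hW
  have h2n : 2 * n ≤ D - 2 * k := by omega
  have hLI : LinearIndependent ℂ (fun i : Fin (n + 1) => w i.val) :=
    Main.wv_li x₀ k hk h2k h2n
  have hwn1 : w (n + 1) = 0 := Main.wv_zero_of_ge x₀ k h2k (by omega)
  have hwW : ∀ i ≤ n, w i ∈ W := fun i hi => Submodule.subset_span ⟨i, hi, rfl⟩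
  have hmv_sum : ∀ (M : Matrix (HVtx D) (HVtx D) ℂ) (s : Finset (Fin (n + 1)))
      (c : Fin (n + 1) → ℂ) (f : Fin (n + 1) → HVtx D → ℂ),
      M.mulVec (∑ i ∈ s, c i • f i) = ∑ i ∈ s, c i • M.mulVec (f i) := by
    intro M s c f
    have e : ∀ v, M.mulVec v = M.mulVecLin v := fun v => (Matrix.mulVecLin_apply _ _).symm
    rw [e, map_sum]
    exact Finset.sum_congr rfl fun i _ => by rw [_root_.map_smul, e]
  -- the action of A on basis vectors stays in W
  have hAdjW : ∀ i ≤ n, (adjHalf D).mulVec (w i) ∈ W := by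
    intro i hi
    rw [Main.adj_wv x₀ k h2k i]
    apply W.add_mem
    apply W.add_mem
    · by_cases h0 : i = 0
      · rw [if_pos h0, smul_zero]; exact W.zero_mem
      · rw [if_neg h0]; exact W.smul_mem _ (hwW _ (by omega))
    · exact W.smul_mem _ (hwW _ hi)
    · by_cases hin : i = n
      · have hz : Main.wv x₀ k (i + 1) = 0 := Main.wv_zero_of_ge x₀ k h2k (by omega)
        rw [hz, smul_zero]; exact W.zero_mem
      · exact W.smul_mem _ (hwW _ (by omega))
  have hDualW : ∀ i ≤ n, (dualHalf D x₀).mulVec (w i) ∈ W := by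
    intro i hi
    rw [Main.dual_wv x₀ k h2k i]
    exact W.smul_mem _ (hwW _ hi)
  have hInv : ∀ M : Matrix (HVtx D) (HVtx D) ℂ,
      (∀ i ≤ n, M.mulVec (w i) ∈ W) → MatInvariant M W := by
    intro M hM v hv
    rw [hW, himg, Submodule.mem_span_range_iff_exists_fun] at hv
    obtain ⟨c, rfl⟩ := hv
    rw [hmv_sum M Finset.univ c _]
    exact Submodule.sum_mem _ fun i _ =>
      Submodule.smul_mem _ _ (hM i.val (by have := i.isLt; omega))
  refine ⟨W, ?_, hInv _ hAdjW, hInv _ hDualW, ?_, w, hwW, hLI, rfl, hwn1,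
    fun i _ => Main.adj_wv x₀ k h2k i, fun i _ => Main.dual_wv x₀ k h2k i⟩
  · rw [hW, himg, finrank_span_eq_card hLI, Fintype.card_fin]
  · -- minimality
    intro U hUW hUA hUD
    by_cases hUbot : U = ⊥
    · exact Or.inl hUbot
    right
    obtain ⟨v, hvU, hvne⟩ := Submodule.ne_bot_iff U |>.mp hUbot
    have hvW := hUW hvU
    rw [hW, himg, Submodule.mem_span_range_iff_exists_fun] at hvW
    obtain ⟨c, hc⟩ := hvW
    have hex : ∃ i : Fin (n + 1), c i ≠ 0 := by
      by_contra hcz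
      push_neg at hcz
      apply hvne
      rw [← hc]
      exact Finset.sum_eq_zero fun i _ => by rw [hcz i, zero_smul]
    obtain ⟨i₀, hi₀⟩ := hex
    set a : ℕ → ℂ := fun j => if h : j < n + 1 then c ⟨j, h⟩ else 0 with ha
    have hsumeq : ∑ j ∈ Finset.range (n + 1), a j • w j = v := by
      rw [← hc, ← Fin.sum_univ_eq_sum_range (fun j => a j • w j) (n + 1)]
      apply Finset.sum_congr rfl
      intro i _
      congr 1
      rw [ha]
      simp only [i.isLt, dif_pos]
    have hextr := Main.extract x₀ k h2k U hUD (Finset.range (n + 1)) a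
      (by rw [hsumeq]; exact hvU)
    have h0 := hextr i₀.val (Finset.mem_range.mpr i₀.isLt)
    have hai₀ : a i₀.val = c i₀ := by rw [ha]; simp only [i₀.isLt, dif_pos]
    have hwi₀ : w i₀.val ∈ U := by
      rw [hai₀] at h0
      have := U.smul_mem (c i₀)⁻¹ h0
      rwa [smul_smul, inv_mul_cancel₀ hi₀, one_smul] at this
    have hi₀n : i₀.val ≤ n := by have := i₀.isLt; omega
    have hup : ∀ d, i₀.val + d ≤ n → w (i₀.val + d) ∈ U := by
      intro d
      induction d with
      | zero => intro _; exact hwi₀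
      | succ d ih =>
          intro hd
          have h1 := ih (by omega)
          have h2 := (Main.step_both x₀ k hk h2k hn U hUA hUD (by omega) h1).1
          rwa [show i₀.val + (d + 1) = (i₀.val + d) + 1 from by omega]
    have hdown : ∀ d, d ≤ i₀.val → w (i₀.val - d) ∈ U := by
      intro d
      induction d with
      | zero => intro _; exact hwi₀
      | succ d ih =>
          intro hd
          have h1 := ih (by omega)
          have h2 := (Main.step_both x₀ k hk h2k hn U hUA hUD (by omega) h1).2 (by omega)
          rwa [show i₀.val - (d + 1) = (i₀.val - d) - 1 from by omega]
    have hall : ∀ j ≤ n, w j ∈ U := by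
      intro j hj
      rcases le_or_gt i₀.val j with h | h
      · have := hup (j - i₀.val) (by omega)
        rwa [show i₀.val + (j - i₀.val) = j from by omega] at this
      · have := hdown (i₀.val - j) (by omega)
        rwa [show i₀.val - (i₀.val - j) = j from by omega] at this
    apply le_antisymm hUW
    rw [hW]
    apply Submodule.span_le.mpr
    rintro _ ⟨j, hj, rfl⟩
    exact hall j (by simpa using hj)
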